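/- There exists a constant C > 0 with the following property. Let Υ⁻ = (−∞,0)×(0,1) ⊆ ℝ². For every ψ : ℝ² → ℝ that is continuously differentiable on an open set containing the closure of Υ⁻ and satisfies ∫_{Υ⁻} ‖∇ψ‖² dξ < ∞, one has ∫_{Υ⁻} min(1, 1/|ξ₁|)² ψ(ξ)² dξ ≤ C ( ∫_{(−2,0)×(0,1)} ψ(ξ)² dξ + ∫_{Υ⁻} ‖∇ψ(ξ)‖² dξ ). -/

import Mathlib

open MeasureTheory ENNReal

/-- Squared norm of the gradient of `ψ : ℝ × ℝ → ℝ`. -/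
noncomputable def gradSq (ψ : ℝ × ℝ → ℝ) (ξ : ℝ × ℝ) : ℝ :=
  (deriv (fun t => ψ (t, ξ.2)) ξ.1) ^ 2 + (deriv (fun s => ψ (ξ.1, s)) ξ.2) ^ 2

namespace WESaux

open Set ENNReal

/-- Pointwise AM–GM estimate. -/
lemma pt_ineq (x y t : ℝ) : 2 * x * y / t ≤ 1 / 2 * (x ^ 2 / t ^ 2) + 2 * y ^ 2 := by
  have h1 : 2 * x * y / t = 2 * (x / t) * y := by ring
  have h2 : x ^ 2 / t ^ 2 = (x / t) ^ 2 := by rw [div_pow]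
  rw [h1, h2]
  nlinarith [sq_nonneg (x / t - 2 * y)]

/-- Real Hardy-type estimate on a compact interval via integration by parts. -/
lemma hardy_real (g D : ℝ → ℝ) (b a : ℝ) (hb : b < a) (ha : a ≤ -1)
    (hg : ∀ t ∈ Set.Icc b a, HasDerivAt g (D t) t)
    (hD : ContinuousOn D (Set.Icc b a)) :
    ∫ t in b..a, g t ^ 2 / t ^ 2 ≤ 2 * g a ^ 2 + 4 * ∫ t in b..a, D t ^ 2 := by
  have hba : b ≤ a := hb.le
  have ha0 : a < 0 := lt_of_le_of_lt ha (by norm_num)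
  have hb0 : b < 0 := hb.trans ha0
  have hne : ∀ t ∈ Set.Icc b a, t ≠ 0 := fun t ht => (lt_of_le_of_lt ht.2 ha0).ne
  have ht2 : ∀ t ∈ Set.Icc b a, t ^ 2 ≠ 0 := fun t ht => pow_ne_zero 2 (hne t ht)
  have hgc : ContinuousOn g (Set.Icc b a) := fun t ht =>
    (hg t ht).continuousAt.continuousWithinAt
  have hc1 : ContinuousOn (fun t => g t ^ 2 / t ^ 2) (Set.Icc b a) :=
    (hgc.pow 2).div ((continuous_pow 2).continuousOn) ht2
  have hc2 : ContinuousOn (fun t => 2 * g t * D t / t) (Set.Icc b a) :=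
    ((continuousOn_const.mul hgc).mul hD).div continuousOn_id hne
  have hc3 : ContinuousOn (fun t => D t ^ 2) (Set.Icc b a) := hD.pow 2
  have hi1 : IntervalIntegrable (fun t => g t ^ 2 / t ^ 2) volume b a :=
    (Set.uIcc_of_le hba ▸ hc1).intervalIntegrable
  have hi2 : IntervalIntegrable (fun t => 2 * g t * D t / t) volume b a :=
    (Set.uIcc_of_le hba ▸ hc2).intervalIntegrable
  have hi3 : IntervalIntegrable (fun t => D t ^ 2) volume b a :=
    (Set.uIcc_of_le hba ▸ hc3).intervalIntegrable
  have hibp : ∫ t in b..a, (g t ^ 2 / t ^ 2 - 2 * g t * D t / t)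
      = -g a ^ 2 / a - -g b ^ 2 / b := by
    have hder : ∀ t ∈ Set.uIcc b a,
        HasDerivAt (fun u => -g u ^ 2 / u) (g t ^ 2 / t ^ 2 - 2 * g t * D t / t) t := by
      rw [Set.uIcc_of_le hba]
      intro t ht
      have h1 : HasDerivAt (fun u => -g u ^ 2) (-(2 * g t * D t)) t := by
        have := ((hg t ht).fun_pow 2).fun_neg
        refine this.congr_deriv ?_
        push_cast
        ring
      have h2 := h1.div (hasDerivAt_id t) (hne t ht)
      refine h2.congr_deriv ?_
      simp only [id]
      field_simp [hne t ht]
      ring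
    have hint : IntervalIntegrable (fun t => g t ^ 2 / t ^ 2 - 2 * g t * D t / t) volume b a :=
      hi1.sub hi2
    simpa using intervalIntegral.integral_eq_sub_of_hasDerivAt hder hint
  have hpt : ∀ t ∈ Set.Icc b a,
      2 * g t * D t / t ≤ 1 / 2 * (g t ^ 2 / t ^ 2) + 2 * D t ^ 2 :=
    fun t _ => pt_ineq (g t) (D t) t
  have hi4 : IntervalIntegrable (fun t => 1 / 2 * (g t ^ 2 / t ^ 2) + 2 * D t ^ 2) volume b a :=
    (hi1.const_mul _).add (hi3.const_mul _)
  have hmono := intervalIntegral.integral_mono_on hba hi2 hi4 hpt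
  have hsplit : ∫ t in b..a, (1 / 2 * (g t ^ 2 / t ^ 2) + 2 * D t ^ 2)
      = 1 / 2 * (∫ t in b..a, g t ^ 2 / t ^ 2) + 2 * ∫ t in b..a, D t ^ 2 := by
    rw [intervalIntegral.integral_add (hi1.const_mul _) (hi3.const_mul _),
      intervalIntegral.integral_const_mul, intervalIntegral.integral_const_mul]
  have hsub : ∫ t in b..a, (g t ^ 2 / t ^ 2 - 2 * g t * D t / t)
      = (∫ t in b..a, g t ^ 2 / t ^ 2) - ∫ t in b..a, 2 * g t * D t / t :=
    intervalIntegral.integral_sub hi1 hi2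
  have e1 : -g a ^ 2 / a ≤ g a ^ 2 := by
    have h : -g a ^ 2 / a = g a ^ 2 / (-a) := by rw [div_neg, neg_div]
    rw [h]
    exact div_le_self (sq_nonneg _) (by linarith)
  have e2 : 0 ≤ -g b ^ 2 / b := by
    have h : -g b ^ 2 / b = g b ^ 2 / (-b) := by rw [div_neg, neg_div]
    rw [h]
    exact div_nonneg (sq_nonneg _) (by linarith)
  rw [hsub] at hibp
  rw [hsplit] at hmono
  linarith

/-- ENNReal version of the Hardy-type estimate on a compact interval. -/
lemma hardy_ennreal (g D : ℝ → ℝ) (b a : ℝ) (hb : b < a) (ha : a ≤ -1)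
    (hg : ∀ t ∈ Set.Icc b a, HasDerivAt g (D t) t)
    (hD : ContinuousOn D (Set.Icc b a)) :
    ∫⁻ t in Set.Ioc b a, ENNReal.ofReal (g t ^ 2 / t ^ 2)
      ≤ ENNReal.ofReal (2 * g a ^ 2) + 4 * ∫⁻ t in Set.Ioc b a, ENNReal.ofReal (D t ^ 2) := by
  have hba : b ≤ a := hb.le
  have ha0 : a < 0 := lt_of_le_of_lt ha (by norm_num)
  have hne : ∀ t ∈ Set.Icc b a, t ≠ 0 := fun t ht => (lt_of_le_of_lt ht.2 ha0).ne
  have ht2 : ∀ t ∈ Set.Icc b a, t ^ 2 ≠ 0 := fun t ht => pow_ne_zero 2 (hne t ht)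
  have hgc : ContinuousOn g (Set.Icc b a) := fun t ht =>
    (hg t ht).continuousAt.continuousWithinAt
  have hc1 : ContinuousOn (fun t => g t ^ 2 / t ^ 2) (Set.Icc b a) :=
    (hgc.pow 2).div ((continuous_pow 2).continuousOn) ht2
  have hc3 : ContinuousOn (fun t => D t ^ 2) (Set.Icc b a) := hD.pow 2
  have hi1 : IntervalIntegrable (fun t => g t ^ 2 / t ^ 2) volume b a :=
    (Set.uIcc_of_le hba ▸ hc1).intervalIntegrable
  have hi3 : IntervalIntegrable (fun t => D t ^ 2) volume b a :=
    (Set.uIcc_of_le hba ▸ hc3).intervalIntegrable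
  have hint1 : IntegrableOn (fun t => g t ^ 2 / t ^ 2) (Set.Ioc b a) :=
    (intervalIntegrable_iff_integrableOn_Ioc_of_le hba).1 hi1
  have hint3 : IntegrableOn (fun t => D t ^ 2) (Set.Ioc b a) :=
    (intervalIntegrable_iff_integrableOn_Ioc_of_le hba).1 hi3
  have h1 : ENNReal.ofReal (∫ t in Set.Ioc b a, g t ^ 2 / t ^ 2)
      = ∫⁻ t in Set.Ioc b a, ENNReal.ofReal (g t ^ 2 / t ^ 2) :=
    ofReal_integral_eq_lintegral_ofReal hint1
      (Filter.Eventually.of_forall fun t => div_nonneg (sq_nonneg _) (sq_nonneg _))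
  have h3 : ENNReal.ofReal (∫ t in Set.Ioc b a, D t ^ 2)
      = ∫⁻ t in Set.Ioc b a, ENNReal.ofReal (D t ^ 2) :=
    ofReal_integral_eq_lintegral_ofReal hint3
      (Filter.Eventually.of_forall fun t => sq_nonneg _)
  have key := hardy_real g D b a hb ha hg hD
  rw [intervalIntegral.integral_of_le hba, intervalIntegral.integral_of_le hba] at key
  calc ∫⁻ t in Set.Ioc b a, ENNReal.ofReal (g t ^ 2 / t ^ 2)
      = ENNReal.ofReal (∫ t in Set.Ioc b a, g t ^ 2 / t ^ 2) := h1.symm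
    _ ≤ ENNReal.ofReal (2 * g a ^ 2 + 4 * ∫ t in Set.Ioc b a, D t ^ 2) :=
        ENNReal.ofReal_le_ofReal key
    _ ≤ ENNReal.ofReal (2 * g a ^ 2)
        + ENNReal.ofReal (4 * ∫ t in Set.Ioc b a, D t ^ 2) := ENNReal.ofReal_add_le
    _ = ENNReal.ofReal (2 * g a ^ 2)
        + 4 * ∫⁻ t in Set.Ioc b a, ENNReal.ofReal (D t ^ 2) := by
        rw [ENNReal.ofReal_mul (by norm_num : (0:ℝ) ≤ 4), h3]
        norm_num

/-- Hardy estimate on one horizontal slice of the semi-strip. -/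
lemma slice_bound {ψ : ℝ × ℝ → ℝ} {U : Set (ℝ × ℝ)} (hU : IsOpen U)
    (hψ : ContDiffOn ℝ 1 ψ U) {s : ℝ} (hs : ∀ t : ℝ, t ≤ 0 → (t, s) ∈ U)
    {a : ℝ} (ha : a ∈ Set.Ioo (-2:ℝ) (-1)) :
    ∫⁻ t in Set.Iio (-2:ℝ), ENNReal.ofReal (ψ (t, s) ^ 2 / t ^ 2)
      ≤ ENNReal.ofReal (2 * ψ (a, s) ^ 2)
        + 4 * ∫⁻ t in Set.Iio (0:ℝ),
            ENNReal.ofReal ((deriv (fun u => ψ (u, s)) t) ^ 2) := by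
  have hdiff : ∀ t : ℝ, t ≤ 0 →
      HasDerivAt (fun u => ψ (u, s)) (deriv (fun u => ψ (u, s)) t) t := by
    intro t ht
    have hmem := hs t ht
    have hd : DifferentiableAt ℝ ψ (t, s) :=
      (hψ.differentiableOn one_ne_zero).differentiableAt (hU.mem_nhds hmem)
    have h2 : HasDerivAt (fun u : ℝ => (u, s)) ((1:ℝ), (0:ℝ)) t :=
      (hasDerivAt_id t).prodMk (hasDerivAt_const t s)
    have h1 : HasDerivAt (fun u : ℝ => ψ (u, s)) (fderiv ℝ ψ (t, s) (1, 0)) t :=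
      hd.hasFDerivAt.comp_hasDerivAt t h2
    exact h1.differentiableAt.hasDerivAt
  have hgc : ContinuousOn (fun t : ℝ => ψ (t, s)) (Set.Iic 0) := fun t ht =>
    (hdiff t ht).continuousAt.continuousWithinAt
  have hFc : ContinuousOn (fun ξ : ℝ × ℝ => fderiv ℝ ψ ξ) U :=
    hψ.continuousOn_fderiv_of_isOpen hU le_rfl
  have hDc : ContinuousOn (fun t : ℝ => deriv (fun u => ψ (u, s)) t) (Set.Iic 0) := by
    have hC : ContinuousOn (fun t : ℝ => fderiv ℝ ψ (t, s) (1, 0)) (Set.Iic 0) := by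
      have h1 : ContinuousOn (fun ξ : ℝ × ℝ => fderiv ℝ ψ ξ ((1:ℝ), (0:ℝ))) U :=
        hFc.clm_apply continuousOn_const
      exact h1.comp ((continuous_id.prodMk continuous_const).continuousOn)
        (fun t (ht : t ∈ Set.Iic (0:ℝ)) => hs t ht)
    apply hC.congr
    intro t ht
    have hd : DifferentiableAt ℝ ψ (t, s) :=
      (hψ.differentiableOn one_ne_zero).differentiableAt (hU.mem_nhds (hs t ht))
    have h2 : HasDerivAt (fun u : ℝ => (u, s)) ((1:ℝ), (0:ℝ)) t :=
      (hasDerivAt_id t).prodMk (hasDerivAt_const t s)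
    exact (hd.hasFDerivAt.comp_hasDerivAt t h2).deriv
  set M := ENNReal.ofReal (2 * ψ (a, s) ^ 2)
    + 4 * ∫⁻ t in Set.Iio (0:ℝ),
        ENNReal.ofReal ((deriv (fun u => ψ (u, s)) t) ^ 2) with hM
  have key : ∀ n : ℕ, ∫⁻ t in Set.Ioo (-(n:ℝ) - 3) (-2:ℝ),
      ENNReal.ofReal (ψ (t, s) ^ 2 / t ^ 2) ≤ M := by
    intro n
    have hn0 : (0:ℝ) ≤ n := n.cast_nonneg
    have hb : -(n:ℝ) - 3 < a := by
      have := ha.1; linarith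
    have hsub : Set.Icc (-(n:ℝ) - 3) a ⊆ Set.Iic 0 := fun t ht =>
      ht.2.trans (by linarith [ha.2] : a ≤ 0)
    have h1 := hardy_ennreal (fun t => ψ (t, s))
      (fun t => deriv (fun u => ψ (u, s)) t) (-(n:ℝ) - 3) a hb ha.2.le
      (fun t ht => hdiff t (hsub ht)) (hDc.mono hsub)
    calc ∫⁻ t in Set.Ioo (-(n:ℝ) - 3) (-2:ℝ), ENNReal.ofReal (ψ (t, s) ^ 2 / t ^ 2)
        ≤ ∫⁻ t in Set.Ioc (-(n:ℝ) - 3) a, ENNReal.ofReal (ψ (t, s) ^ 2 / t ^ 2) :=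
          lintegral_mono_set (fun t ht => ⟨ht.1, (ht.2.trans ha.1).le⟩)
      _ ≤ ENNReal.ofReal (2 * ψ (a, s) ^ 2)
          + 4 * ∫⁻ t in Set.Ioc (-(n:ℝ) - 3) a,
              ENNReal.ofReal ((deriv (fun u => ψ (u, s)) t) ^ 2) := h1
      _ ≤ M := by
          rw [hM]
          refine add_le_add le_rfl (mul_le_mul' le_rfl ?_)
          exact lintegral_mono_set (fun t ht =>
            lt_of_le_of_lt ht.2 (lt_of_le_of_lt ha.2.le (by norm_num)))
  have hmeasn : ∀ n : ℕ, AEMeasurable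
      ((Set.Ioo (-(n:ℝ) - 3) (-2:ℝ)).indicator
        (fun t => ENNReal.ofReal (ψ (t, s) ^ 2 / t ^ 2))) volume := by
    intro n
    rw [aemeasurable_indicator_iff measurableSet_Ioo]
    refine ContinuousOn.aemeasurable ?_ measurableSet_Ioo
    refine ENNReal.continuous_ofReal.comp_continuousOn ?_
    have hsub : Set.Ioo (-(n:ℝ) - 3) (-2:ℝ) ⊆ Set.Iic 0 := fun t ht =>
      (ht.2.trans (by norm_num)).le
    refine ((hgc.mono hsub).pow 2).div ((continuous_pow 2).continuousOn) ?_
    intro t ht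
    exact pow_ne_zero 2 (ht.2.trans (by norm_num)).ne
  have hmono : Monotone (fun n : ℕ => (Set.Ioo (-(n:ℝ) - 3) (-2:ℝ)).indicator
      (fun t => ENNReal.ofReal (ψ (t, s) ^ 2 / t ^ 2))) := by
    intro n m hnm
    apply Set.indicator_le_indicator_of_subset
    · apply Set.Ioo_subset_Ioo_left
      have : (n:ℝ) ≤ m := Nat.cast_le.2 hnm
      linarith
    · exact fun x => zero_le
  have hset : ∀ x : ℝ, (Set.Iio (-2:ℝ)).indicator
      (fun t => ENNReal.ofReal (ψ (t, s) ^ 2 / t ^ 2)) x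
      = ⨆ n : ℕ, (Set.Ioo (-(n:ℝ) - 3) (-2:ℝ)).indicator
          (fun t => ENNReal.ofReal (ψ (t, s) ^ 2 / t ^ 2)) x := by
    intro x
    by_cases hx : x ∈ Set.Iio (-2:ℝ)
    · rw [Set.indicator_of_mem hx]
      obtain ⟨n, hn⟩ := exists_nat_gt (-x - 3)
      apply le_antisymm
      · have hxm : x ∈ Set.Ioo (-(n:ℝ) - 3) (-2:ℝ) := ⟨by linarith, hx⟩
        exact le_trans
          (le_of_eq (Set.indicator_of_mem hxm
            (fun t => ENNReal.ofReal (ψ (t, s) ^ 2 / t ^ 2))).symm)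
          (le_iSup (fun n : ℕ => (Set.Ioo (-(n:ℝ) - 3) (-2:ℝ)).indicator
            (fun t => ENNReal.ofReal (ψ (t, s) ^ 2 / t ^ 2)) x) n)
      · exact iSup_le fun m => Set.indicator_le_self' (fun _ _ => zero_le) x
    · rw [Set.indicator_of_notMem hx]
      have hall : ∀ n : ℕ, (Set.Ioo (-(n:ℝ) - 3) (-2:ℝ)).indicator
          (fun t => ENNReal.ofReal (ψ (t, s) ^ 2 / t ^ 2)) x = 0 := by
        intro n
        exact Set.indicator_of_notMem (fun hmem => hx hmem.2) _
      simp [hall]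
  calc ∫⁻ t in Set.Iio (-2:ℝ), ENNReal.ofReal (ψ (t, s) ^ 2 / t ^ 2)
      = ∫⁻ t, (Set.Iio (-2:ℝ)).indicator
          (fun t => ENNReal.ofReal (ψ (t, s) ^ 2 / t ^ 2)) t :=
        (lintegral_indicator measurableSet_Iio _).symm
    _ = ∫⁻ t, ⨆ n : ℕ, (Set.Ioo (-(n:ℝ) - 3) (-2:ℝ)).indicator
          (fun t => ENNReal.ofReal (ψ (t, s) ^ 2 / t ^ 2)) t :=
        lintegral_congr hset
    _ = ⨆ n : ℕ, ∫⁻ t, (Set.Ioo (-(n:ℝ) - 3) (-2:ℝ)).indicator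
          (fun t => ENNReal.ofReal (ψ (t, s) ^ 2 / t ^ 2)) t :=
        lintegral_iSup' hmeasn (Filter.Eventually.of_forall fun x n m hnm => hmono hnm x)
    _ ≤ M := by
        refine iSup_le fun n => ?_
        rw [lintegral_indicator measurableSet_Ioo]
        exact key n

/-- Tonelli for a product of restricted Lebesgue measures, outer variable second. -/
lemma tonelli_prod (A B : Set ℝ) (f : ℝ × ℝ → ENNReal)
    (hf : AEMeasurable f (volume.restrict (A ×ˢ B))) :
    ∫⁻ ξ in A ×ˢ B, f ξ = ∫⁻ s in B, ∫⁻ t in A, f (t, s) := by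
  have h1 : (volume : Measure (ℝ × ℝ)).restrict (A ×ˢ B)
      = (volume.restrict A).prod (volume.restrict B) := by
    rw [Measure.volume_eq_prod, Measure.prod_restrict]
  rw [h1] at hf ⊢
  exact lintegral_prod_symm f hf

/-- The inner integral of Tonelli is a.e.-measurable in the outer variable. -/
lemma aemeas_inner (A B : Set ℝ) (f : ℝ × ℝ → ENNReal)
    (hf : AEMeasurable f (volume.restrict (A ×ˢ B))) :
    AEMeasurable (fun y => ∫⁻ x in A, f (x, y)) (volume.restrict B) := by
  have h1 : (volume : Measure (ℝ × ℝ)).restrict (A ×ˢ B)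
      = (volume.restrict A).prod (volume.restrict B) := by
    rw [Measure.volume_eq_prod, Measure.prod_restrict]
  rw [h1] at hf
  have h2 : AEMeasurable (fun z : ℝ × ℝ => f z.swap)
      ((volume.restrict B).prod (volume.restrict A)) := hf.prod_swap
  obtain ⟨G, hGm, hGe⟩ := h2
  refine ⟨fun y => ∫⁻ x, G (y, x) ∂(volume.restrict A), hGm.lintegral_prod_right', ?_⟩
  filter_upwards [Measure.ae_ae_of_ae_prod hGe] with y hy
  exact lintegral_congr_ae hy

end WESaux

open WESaux

set_option maxHeartbeats 2000000 in
/-- Inequality (3.27) of the paper in the non-perforated semi-strip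
`Υ⁻ = (−∞,0)×(0,1)`: the weighted `L²` norm of `ψ` (weight `min(1, 1/|ξ₁|)`)
is controlled by its `L²` norm near the end of the strip plus its Dirichlet energy. -/
theorem weighted_estimate_semistrip :
    ∃ C : ℝ, 0 < C ∧
      ∀ ψ : ℝ × ℝ → ℝ,
        (∃ U : Set (ℝ × ℝ), IsOpen U ∧
            closure (Set.Iio (0:ℝ) ×ˢ Set.Ioo (0:ℝ) 1) ⊆ U ∧ ContDiffOn ℝ 1 ψ U) →
        (∫⁻ ξ in Set.Iio (0:ℝ) ×ˢ Set.Ioo (0:ℝ) 1, ENNReal.ofReal (gradSq ψ ξ)) < ⊤ →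
        (∫⁻ ξ in Set.Iio (0:ℝ) ×ˢ Set.Ioo (0:ℝ) 1,
            ENNReal.ofReal ((min 1 (|ξ.1|)⁻¹) ^ 2 * ψ ξ ^ 2))
          ≤ ENNReal.ofReal C *
            ((∫⁻ ξ in Set.Ioo (-2:ℝ) 0 ×ˢ Set.Ioo (0:ℝ) 1, ENNReal.ofReal (ψ ξ ^ 2))
              + ∫⁻ ξ in Set.Iio (0:ℝ) ×ˢ Set.Ioo (0:ℝ) 1,
                  ENNReal.ofReal (gradSq ψ ξ)) := by
  refine ⟨4, by norm_num, ?_⟩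
  rintro ψ ⟨U, hU, hUsub, hψ⟩ _hE
  have hclos : Set.Iic (0:ℝ) ×ˢ Set.Icc (0:ℝ) 1 ⊆ U := by
    rwa [closure_prod_eq, closure_Iio, closure_Ioo (by norm_num : (0:ℝ) ≠ 1)] at hUsub
  set B0 : Set ℝ := Set.Ioo (0:ℝ) 1 with hB0def
  set Bv : ENNReal := ∫⁻ ξ in Set.Ioo (-2:ℝ) 0 ×ˢ B0, ENNReal.ofReal (ψ ξ ^ 2) with hBv
  set Ev : ENNReal := ∫⁻ ξ in Set.Iio (0:ℝ) ×ˢ B0, ENNReal.ofReal (gradSq ψ ξ) with hEv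
  -- continuity facts
  have hψc : ContinuousOn ψ U := hψ.continuousOn
  have hFc : ContinuousOn (fun ξ : ℝ × ℝ => fderiv ℝ ψ ξ) U :=
    hψ.continuousOn_fderiv_of_isOpen hU le_rfl
  have hderiv_eq : ∀ ξ ∈ U, deriv (fun u => ψ (u, ξ.2)) ξ.1 = fderiv ℝ ψ ξ (1, 0) := by
    intro ξ hξ
    have hd : DifferentiableAt ℝ ψ ξ :=
      (hψ.differentiableOn one_ne_zero).differentiableAt (hU.mem_nhds hξ)
    have hd' : HasFDerivAt ψ (fderiv ℝ ψ ξ) (ξ.1, ξ.2) := by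
      rw [Prod.mk.eta]; exact hd.hasFDerivAt
    have h2 : HasDerivAt (fun u : ℝ => (u, ξ.2)) ((1:ℝ), (0:ℝ)) ξ.1 :=
      (hasDerivAt_id ξ.1).prodMk (hasDerivAt_const ξ.1 ξ.2)
    exact (hd'.comp_hasDerivAt ξ.1 h2).deriv
  have hDc : ContinuousOn (fun ξ : ℝ × ℝ => deriv (fun u => ψ (u, ξ.2)) ξ.1) U := by
    have h1 : ContinuousOn (fun ξ : ℝ × ℝ => fderiv ℝ ψ ξ ((1:ℝ), (0:ℝ))) U :=
      hFc.clm_apply continuousOn_const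
    exact h1.congr hderiv_eq
  -- set inclusions into U
  have hsub1 : Set.Iio (-2:ℝ) ×ˢ B0 ⊆ U := by
    rintro ⟨x, y⟩ ⟨hx, hy⟩
    have hx' : x < -2 := hx
    have hy' : 0 < y ∧ y < 1 := hy
    exact hclos ⟨Set.mem_Iic.2 (by linarith), Set.mem_Icc.2 ⟨hy'.1.le, hy'.2.le⟩⟩
  have hsubA : Set.Ioo (-2:ℝ) (-1) ×ˢ B0 ⊆ U := by
    rintro ⟨x, y⟩ ⟨hx, hy⟩
    have hx' : -2 < x ∧ x < -1 := hx
    have hy' : 0 < y ∧ y < 1 := hy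
    exact hclos ⟨Set.mem_Iic.2 (by linarith [hx'.2]), Set.mem_Icc.2 ⟨hy'.1.le, hy'.2.le⟩⟩
  have hsubS : Set.Iio (0:ℝ) ×ˢ B0 ⊆ U := by
    rintro ⟨x, y⟩ ⟨hx, hy⟩
    have hx' : x < 0 := hx
    have hy' : 0 < y ∧ y < 1 := hy
    exact hclos ⟨Set.mem_Iic.2 hx'.le, Set.mem_Icc.2 ⟨hy'.1.le, hy'.2.le⟩⟩
  -- AE-measurability facts
  have haem1 : AEMeasurable (fun ξ : ℝ × ℝ => ENNReal.ofReal (ψ ξ ^ 2 / ξ.1 ^ 2))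
      (volume.restrict (Set.Iio (-2:ℝ) ×ˢ B0)) := by
    refine ContinuousOn.aemeasurable ?_ (measurableSet_Iio.prod measurableSet_Ioo)
    refine ENNReal.continuous_ofReal.comp_continuousOn ?_
    refine ((hψc.mono hsub1).pow 2).div ((continuous_fst.pow 2).continuousOn) ?_
    rintro ⟨x, y⟩ ⟨hx, _⟩
    exact pow_ne_zero 2 (lt_trans hx (by norm_num)).ne
  have haem2 : AEMeasurable (fun ξ : ℝ × ℝ => ENNReal.ofReal (ψ ξ ^ 2))
      (volume.restrict (Set.Ioo (-2:ℝ) (-1) ×ˢ B0)) := by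
    refine ContinuousOn.aemeasurable ?_ (measurableSet_Ioo.prod measurableSet_Ioo)
    exact ENNReal.continuous_ofReal.comp_continuousOn ((hψc.mono hsubA).pow 2)
  have haem3 : AEMeasurable
      (fun ξ : ℝ × ℝ => ENNReal.ofReal ((deriv (fun u => ψ (u, ξ.2)) ξ.1) ^ 2))
      (volume.restrict (Set.Iio (0:ℝ) ×ˢ B0)) := by
    refine ContinuousOn.aemeasurable ?_ (measurableSet_Iio.prod measurableSet_Ioo)
    exact ENNReal.continuous_ofReal.comp_continuousOn ((hDc.mono hsubS).pow 2)
  -- Tonelli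
  have hT1 := tonelli_prod (Set.Iio (-2:ℝ)) B0 _ haem1
  have hT2 := tonelli_prod (Set.Ioo (-2:ℝ) (-1)) B0 _ haem2
  have hT3 := tonelli_prod (Set.Iio (0:ℝ)) B0 _ haem3
  have haemE : AEMeasurable
      (fun y => ∫⁻ x in Set.Iio (0:ℝ),
        ENNReal.ofReal ((deriv (fun u => ψ (u, y)) x) ^ 2))
      (volume.restrict B0) := aemeas_inner _ _ _ haem3
  -- per-slice estimate, averaged over the window (-2,-1)
  have hKE : ∀ s ∈ B0,
      (∫⁻ t in Set.Iio (-2:ℝ), ENNReal.ofReal (ψ (t, s) ^ 2 / t ^ 2))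
        ≤ 2 * (∫⁻ x in Set.Ioo (-2:ℝ) (-1), ENNReal.ofReal (ψ (x, s) ^ 2))
          + 4 * ∫⁻ x in Set.Iio (0:ℝ),
              ENNReal.ofReal ((deriv (fun u => ψ (u, s)) x) ^ 2) := by
    intro s hsB
    have hsl : ∀ a ∈ Set.Ioo (-2:ℝ) (-1),
        ∫⁻ t in Set.Iio (-2:ℝ), ENNReal.ofReal (ψ (t, s) ^ 2 / t ^ 2)
          ≤ ENNReal.ofReal (2 * ψ (a, s) ^ 2)
            + 4 * ∫⁻ x in Set.Iio (0:ℝ),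
                ENNReal.ofReal ((deriv (fun u => ψ (u, s)) x) ^ 2) :=
      fun a haA => slice_bound hU hψ (fun t ht => hclos ⟨ht, hsB.1.le, hsB.2.le⟩) haA
    have hvol : volume (Set.Ioo (-2:ℝ) (-1)) = 1 := by
      rw [Real.volume_Ioo]; norm_num
    calc ∫⁻ t in Set.Iio (-2:ℝ), ENNReal.ofReal (ψ (t, s) ^ 2 / t ^ 2)
        = ∫⁻ _ in Set.Ioo (-2:ℝ) (-1),
            (∫⁻ t in Set.Iio (-2:ℝ), ENNReal.ofReal (ψ (t, s) ^ 2 / t ^ 2)) := by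
          rw [setLIntegral_const, hvol, mul_one]
      _ ≤ ∫⁻ a in Set.Ioo (-2:ℝ) (-1),
            (ENNReal.ofReal (2 * ψ (a, s) ^ 2)
              + 4 * ∫⁻ x in Set.Iio (0:ℝ),
                  ENNReal.ofReal ((deriv (fun u => ψ (u, s)) x) ^ 2)) := by
          refine lintegral_mono_ae ?_
          filter_upwards [ae_restrict_mem measurableSet_Ioo] with a haA
          exact hsl a haA
      _ = (∫⁻ a in Set.Ioo (-2:ℝ) (-1), ENNReal.ofReal (2 * ψ (a, s) ^ 2))
          + 4 * ∫⁻ x in Set.Iio (0:ℝ),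
              ENNReal.ofReal ((deriv (fun u => ψ (u, s)) x) ^ 2) := by
          rw [lintegral_add_right _ measurable_const, setLIntegral_const, hvol, mul_one]
      _ = 2 * (∫⁻ x in Set.Ioo (-2:ℝ) (-1), ENNReal.ofReal (ψ (x, s) ^ 2))
          + 4 * ∫⁻ x in Set.Iio (0:ℝ),
              ENNReal.ofReal ((deriv (fun u => ψ (u, s)) x) ^ 2) := by
          congr 1
          rw [← lintegral_const_mul' 2 _ ENNReal.ofNat_ne_top]
          refine lintegral_congr fun a => ?_
          rw [ENNReal.ofReal_mul (by norm_num : (0:ℝ) ≤ 2)]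
          norm_num
  -- the main middle-piece estimate
  have hmid : (∫⁻ ξ in Set.Iio (-2:ℝ) ×ˢ B0, ENNReal.ofReal (ψ ξ ^ 2 / ξ.1 ^ 2))
      ≤ 2 * Bv + 4 * Ev := by
    rw [hT1]
    calc (∫⁻ s in B0, ∫⁻ t in Set.Iio (-2:ℝ), ENNReal.ofReal (ψ (t, s) ^ 2 / t ^ 2))
        ≤ ∫⁻ s in B0,
            (2 * (∫⁻ x in Set.Ioo (-2:ℝ) (-1), ENNReal.ofReal (ψ (x, s) ^ 2))
              + 4 * ∫⁻ x in Set.Iio (0:ℝ),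
                  ENNReal.ofReal ((deriv (fun u => ψ (u, s)) x) ^ 2)) := by
          refine lintegral_mono_ae ?_
          filter_upwards [ae_restrict_mem measurableSet_Ioo] with s hsB
          exact hKE s hsB
      _ = 2 * (∫⁻ s in B0, ∫⁻ x in Set.Ioo (-2:ℝ) (-1), ENNReal.ofReal (ψ (x, s) ^ 2))
          + 4 * ∫⁻ s in B0, ∫⁻ x in Set.Iio (0:ℝ),
              ENNReal.ofReal ((deriv (fun u => ψ (u, s)) x) ^ 2) := by
          rw [lintegral_add_right' _ (haemE.const_mul 4),
            lintegral_const_mul' 2 _ ENNReal.ofNat_ne_top,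
            lintegral_const_mul' 4 _ (by norm_num : (4:ENNReal) ≠ ⊤)]
      _ ≤ 2 * Bv + 4 * Ev := by
          refine add_le_add (mul_le_mul' le_rfl ?_) (mul_le_mul' le_rfl ?_)
          · rw [← hT2]
            exact lintegral_mono_set
              (Set.prod_mono (Set.Ioo_subset_Ioo_right (by norm_num)) subset_rfl)
          · rw [← hT3]
            refine lintegral_mono fun ξ => ?_
            refine ENNReal.ofReal_le_ofReal ?_
            exact le_add_of_nonneg_right (sq_nonneg _)
  -- pointwise weight bounds
  have hW2 : ∀ ξ : ℝ × ℝ, ENNReal.ofReal ((min 1 (|ξ.1|)⁻¹) ^ 2 * ψ ξ ^ 2)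
      ≤ ENNReal.ofReal (ψ ξ ^ 2) := by
    intro ξ
    refine ENNReal.ofReal_le_ofReal ?_
    have h0 : 0 ≤ min 1 (|ξ.1|)⁻¹ := le_min (by norm_num) (inv_nonneg.2 (abs_nonneg _))
    have h1 : min 1 (|ξ.1|)⁻¹ ≤ 1 := min_le_left _ _
    have hm : (min 1 (|ξ.1|)⁻¹) ^ 2 ≤ 1 := by nlinarith
    have := mul_le_mul_of_nonneg_right hm (sq_nonneg (ψ ξ))
    linarith
  have hW1 : ∀ ξ ∈ Set.Iio (-2:ℝ) ×ˢ B0,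
      ENNReal.ofReal ((min 1 (|ξ.1|)⁻¹) ^ 2 * ψ ξ ^ 2)
        ≤ ENNReal.ofReal (ψ ξ ^ 2 / ξ.1 ^ 2) := by
    rintro ⟨x, y⟩ ⟨hx, -⟩
    refine ENNReal.ofReal_le_ofReal (le_of_eq ?_)
    have hxlt : x < -2 := hx
    have hx2 : (1:ℝ) ≤ |x| := by
      rw [abs_of_neg (lt_trans hxlt (by norm_num))]; linarith
    have hmin : min 1 (|x|)⁻¹ = (|x|)⁻¹ := by
      refine min_eq_right ?_
      rw [show (1:ℝ) = (1:ℝ)⁻¹ by norm_num]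
      exact inv_anti₀ (by norm_num) hx2
    show (min 1 (|x|)⁻¹) ^ 2 * ψ (x, y) ^ 2 = ψ (x, y) ^ 2 / x ^ 2
    rw [hmin, inv_pow, sq_abs, inv_mul_eq_div]
  have hnull : volume (({-2} : Set ℝ) ×ˢ B0) = 0 := by
    rw [Measure.volume_eq_prod, Measure.prod_prod, Real.volume_singleton, zero_mul]
  have hsplit_set : Set.Iio (0:ℝ) ×ˢ B0
      ⊆ (Set.Iio (-2:ℝ) ×ˢ B0)
        ∪ ((Set.Ioo (-2:ℝ) 0 ×ˢ B0) ∪ (({-2} : Set ℝ) ×ˢ B0)) := by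
    rintro ⟨x, y⟩ ⟨hx, hy⟩
    rcases lt_trichotomy x (-2) with h | h | h
    · exact Or.inl ⟨h, hy⟩
    · exact Or.inr (Or.inr ⟨h, hy⟩)
    · exact Or.inr (Or.inl ⟨⟨h, hx⟩, hy⟩)
  have hfinal : (∫⁻ ξ in Set.Iio (0:ℝ) ×ˢ B0,
      ENNReal.ofReal ((min 1 (|ξ.1|)⁻¹) ^ 2 * ψ ξ ^ 2)) ≤ 4 * (Bv + Ev) := by
    calc ∫⁻ ξ in Set.Iio (0:ℝ) ×ˢ B0,
          ENNReal.ofReal ((min 1 (|ξ.1|)⁻¹) ^ 2 * ψ ξ ^ 2)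
        ≤ ∫⁻ ξ in (Set.Iio (-2:ℝ) ×ˢ B0)
            ∪ ((Set.Ioo (-2:ℝ) 0 ×ˢ B0) ∪ (({-2} : Set ℝ) ×ˢ B0)),
            ENNReal.ofReal ((min 1 (|ξ.1|)⁻¹) ^ 2 * ψ ξ ^ 2) :=
          lintegral_mono_set hsplit_set
      _ ≤ (∫⁻ ξ in Set.Iio (-2:ℝ) ×ˢ B0,
            ENNReal.ofReal ((min 1 (|ξ.1|)⁻¹) ^ 2 * ψ ξ ^ 2))
          + ((∫⁻ ξ in Set.Ioo (-2:ℝ) 0 ×ˢ B0,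
              ENNReal.ofReal ((min 1 (|ξ.1|)⁻¹) ^ 2 * ψ ξ ^ 2))
            + ∫⁻ ξ in ({-2} : Set ℝ) ×ˢ B0,
                ENNReal.ofReal ((min 1 (|ξ.1|)⁻¹) ^ 2 * ψ ξ ^ 2)) :=
          le_trans (lintegral_union_le _ _ _)
            (add_le_add le_rfl (lintegral_union_le _ _ _))
      _ ≤ (∫⁻ ξ in Set.Iio (-2:ℝ) ×ˢ B0, ENNReal.ofReal (ψ ξ ^ 2 / ξ.1 ^ 2))
          + (Bv + 0) := by
          refine add_le_add ?_ (add_le_add ?_ ?_)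
          · refine lintegral_mono_ae ?_
            filter_upwards [ae_restrict_mem
              (measurableSet_Iio.prod measurableSet_Ioo)] with ξ hξ
            exact hW1 ξ hξ
          · exact lintegral_mono fun ξ => hW2 ξ
          · exact le_of_eq (setLIntegral_measure_zero _ _ hnull)
      _ ≤ (2 * Bv + 4 * Ev) + (Bv + 0) := add_le_add hmid le_rfl
      _ ≤ 4 * (Bv + Ev) := by
          rw [add_zero, mul_add]
          calc 2 * Bv + 4 * Ev + Bv = 3 * Bv + 4 * Ev := by ring
            _ ≤ 4 * Bv + 4 * Ev :=
              add_le_add (mul_le_mul' (by norm_num) le_rfl) le_rfl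
  calc (∫⁻ ξ in Set.Iio (0:ℝ) ×ˢ B0,
        ENNReal.ofReal ((min 1 (|ξ.1|)⁻¹) ^ 2 * ψ ξ ^ 2)) ≤ 4 * (Bv + Ev) := hfinal
    _ = ENNReal.ofReal 4 * (Bv + Ev) := by norm_num
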